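/- (Decomposition of Zₙ^{(3)}.) For the two-armed σ-over-penalized Narendra–Shapiro algorithm with γ₁ ∈ (0,1), ε ∈ (0,1/3] and n₀ = ⌊1/(4ε²γ₁²π²)⌋ + 1: for every n ≥ n₀, E[Zₙ₊₁^{(3)} − Zₙ^{(3)} | Fₙ] ≤ γₙ₊₁·(1−Xₙ)·Pₙ(Xₙ) + (1−σp₂)·[3γₙ₊₁ρₙ₊₁² + γₙ₊₁²ρₙ₊₁³], where Pₙ is the cubic polynomial Pₙ(x) = ((1−x)²/γₙ₊₁)(εₙ − 3πx) − 3ρ̃₁(1−x)κ_σ(x) + 3(x(1−x)²p₁ + x²(1−x)p₂) + γₙ₊₁(−x(1−x)²p₁ + x³p₂). -/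

import Mathlib

open MeasureTheory ProbabilityTheory Real Filter

noncomputable section

/-- Step sequence `γₙ = γ₁ / √n` (also used for `ρₙ = ρ₁ / √n`). -/
def NSstep (c : ℝ) (n : ℕ) : ℝ := c / Real.sqrt n

/-- Real value (`0` or `1`) attached to a Boolean Bernoulli outcome. -/
def bval (b : Bool) : ℝ := if b then 1 else 0

/-- Probability that a Bernoulli random variable of parameter `p` takes the value `b`. -/
def bern (p : ℝ) (b : Bool) : ℝ := if b then p else 1 - p

/-- The two-armed `σ`-over-penalized Narendra–Shapiro algorithm with steps
`γₙ = γ₁/√n` and `ρₙ = ρ₁/√n`.  Arm `0` (reward probability `p₁`) is the best arm,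
arm `1` has reward probability `p₂`.  `Xₙ` is the probability of drawing arm `0` at
time `n`, `Iₙ₊₁` is the arm selected at step `n+1`, `Aₙʲ` the reward of arm `j` at
time `n` and `Bₙ` the extra Bernoulli(σ) variables used for the over-penalization. -/
structure NS2 (Ω : Type) [mΩ : MeasurableSpace Ω] where
  μ : Measure Ω
  prob : IsProbabilityMeasure μ
  p₁ : ℝ
  p₂ : ℝ
  σ : ℝ
  γ₁ : ℝ
  ρ₁ : ℝ
  hp₂ : 0 ≤ p₂
  hp : p₂ < p₁
  hp₁ : p₁ ≤ 1
  hσ : σ ∈ Set.Icc (0:ℝ) 1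
  hγ₁ : γ₁ ∈ Set.Ioo (0:ℝ) 1
  hρ₁ : ρ₁ ∈ Set.Ioo (0:ℝ) 1
  A : ℕ → Fin 2 → Ω → ℝ
  B : ℕ → Ω → ℝ
  I : ℕ → Ω → Fin 2
  X : ℕ → Ω → ℝ
  F : Filtration ℕ mΩ
  hAmeas : ∀ n j, Measurable (A n j)
  hBmeas : ∀ n, Measurable (B n)
  hAval : ∀ n j ω, A n j ω = 0 ∨ A n j ω = 1
  hBval : ∀ n ω, B n ω = 0 ∨ B n ω = 1
  hAlaw : ∀ n (j : Fin 2), μ {ω | A n j ω = 1} = ENNReal.ofReal (if j = 0 then p₁ else p₂)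
  hBlaw : ∀ n, μ {ω | B n ω = 1} = ENNReal.ofReal σ
  /-- the reward sequences and the penalization sequence are (mutually) independent -/
  hIndep : iIndepFun (m := fun _ : ℕ × Fin 3 => (inferInstance : MeasurableSpace ℝ))
      (fun k ω => if k.2 = 0 then A k.1 0 ω else if k.2 = 1 then A k.1 1 ω else B k.1 ω) μ
  hX0 : ∀ ω, X 0 ω ∈ Set.Icc (0:ℝ) 1
  hXmeas : ∀ n, Measurable[F n] (X n)
  hImeas : ∀ n, Measurable[F (n+1)] (I (n+1))
  hObs : ∀ n, Measurable[F (n+1)] (fun ω => A (n+1) (I (n+1) ω) ω)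
  /-- conditionally on the past, the arm `Iₙ₊₁` is drawn with distribution `(Xₙ, 1-Xₙ)`,
  independently of the (Bernoulli) rewards and of `Bₙ₊₁`. -/
  condLaw : ∀ n (j : Fin 2) (a b : Bool),
    (μ[Set.indicator {ω | I (n+1) ω = j ∧ A (n+1) j ω = bval a ∧ B (n+1) ω = bval b}
        (fun _ => (1:ℝ)) | F n])
      =ᵐ[μ] fun ω => (if j = 0 then X n ω else 1 - X n ω) * bern (if j = 0 then p₁ else p₂) a
          * bern σ b
  /-- the recursive update of the algorithm -/
  hrec : ∀ n ω, X (n+1) ω = X n ω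
      + NSstep γ₁ (n+1) * ((if I (n+1) ω = 0 then 1 else 0) - X n ω) * A (n+1) (I (n+1) ω) ω
      - NSstep γ₁ (n+1) * NSstep ρ₁ (n+1) *
        (X n ω * (if I (n+1) ω = 0 then 1 else 0)
          - (1 - X n ω) * (if I (n+1) ω = 1 then 1 else 0)) *
        (1 - A (n+1) (I (n+1) ω) ω * B (n+1) ω)

/-- Pseudo-regret after `n` plays: `R̄ₙ = (p₁-p₂) E[∑_{k=1}^n (1-X_k)]`. -/
def NS2.pseudoRegret {Ω : Type} [MeasurableSpace Ω] (S : NS2 Ω) (n : ℕ) : ℝ :=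
  (S.p₁ - S.p₂) * ∫ ω, (∑ k ∈ Finset.Icc 1 n, (1 - S.X k ω)) ∂S.μ

/-- The sequence `Zₙ⁽³⁾ = (1-Xₙ)³/γₙ`. -/
def NS2.Z3 {Ω : Type} [MeasurableSpace Ω] (S : NS2 Ω) (n : ℕ) (ω : Ω) : ℝ :=
  (1 - S.X n ω) ^ 3 / NSstep S.γ₁ n

/-- `εₙ = 1/γₙ₊₁ - 1/γₙ`. -/
def epsSeq (γ₁ : ℝ) (n : ℕ) : ℝ := 1 / NSstep γ₁ (n+1) - 1 / NSstep γ₁ n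

/-- The penalty drift `κ_σ(x) = (1-σp₂)(1-x)² - (1-σp₁)x²`. -/
def kappa (p₁ p₂ σ : ℝ) (x : ℝ) : ℝ := (1 - σ * p₂) * (1 - x)^2 - (1 - σ * p₁) * x^2

/-- The cubic polynomial `Pₙ` appearing in the decomposition of `Zₙ⁽³⁾`
(`π = p₁ - p₂`, `ρ̃₁ = ρ₁/γ₁`). -/
def Pcub (p₁ p₂ σ γ₁ ρ₁ : ℝ) (n : ℕ) (x : ℝ) : ℝ :=
  ((1 - x)^2 / NSstep γ₁ (n+1)) * (epsSeq γ₁ n - 3 * (p₁ - p₂) * x)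
    - 3 * (ρ₁ / γ₁) * (1 - x) * kappa p₁ p₂ σ x
    + 3 * (x * (1 - x)^2 * p₁ + x^2 * (1 - x) * p₂)
    + NSstep γ₁ (n+1) * (-(x * (1 - x)^2 * p₁) + x^3 * p₂)


lemma NSstep_pos {c : ℝ} (hc : 0 < c) {n : ℕ} (hn : 1 ≤ n) : 0 < NSstep c n := by
  apply div_pos hc
  apply Real.sqrt_pos.2
  exact_mod_cast Nat.lt_of_lt_of_le Nat.zero_lt_one hn

lemma NSstep_le {c : ℝ} (hc : 0 < c) {n : ℕ} (hn : 1 ≤ n) : NSstep c n ≤ c := by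
  have h1 : (1:ℝ) ≤ Real.sqrt n := by
    rw [show (1:ℝ) = Real.sqrt 1 by simp]
    exact Real.sqrt_le_sqrt (by exact_mod_cast hn)
  calc NSstep c n = c / Real.sqrt n := rfl
    _ ≤ c / 1 := by apply div_le_div_of_nonneg_left hc.le one_pos h1
    _ = c := by ring

lemma fin2_cases (j : Fin 2) : j = 0 ∨ j = 1 := by omega

lemma NS2.X_mem {Ω : Type} [MeasurableSpace Ω] (S : NS2 Ω) : ∀ n ω, S.X n ω ∈ Set.Icc (0:ℝ) 1 := by
  intro n
  induction n with
  | zero => exact S.hX0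
  | succ n ih =>
    intro ω
    have hg0 : 0 < NSstep S.γ₁ (n+1) := NSstep_pos S.hγ₁.1 (by omega)
    have hg1 : NSstep S.γ₁ (n+1) ≤ 1 := (NSstep_le S.hγ₁.1 (by omega)).trans S.hγ₁.2.le
    have hr0 : 0 < NSstep S.ρ₁ (n+1) := NSstep_pos S.hρ₁.1 (by omega)
    have hr1 : NSstep S.ρ₁ (n+1) ≤ 1 := (NSstep_le S.hρ₁.1 (by omega)).trans S.hρ₁.2.le
    obtain ⟨hx0, hx1⟩ := ih ω
    have hA := S.hAval (n+1) (S.I (n+1) ω) ω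
    have hB := S.hBval (n+1) ω
    rw [Set.mem_Icc, S.hrec n ω]
    set g := NSstep S.γ₁ (n+1)
    set r := NSstep S.ρ₁ (n+1)
    have hgr : 0 < g * r := mul_pos hg0 hr0
    have hgr1 : g * r ≤ 1 := by nlinarith
    rcases fin2_cases (S.I (n+1) ω) with h | h <;> rw [h] at hA <;>
      rcases hA with hA | hA <;> rcases hB with hB | hB <;>
        simp only [h, hA, hB] <;> norm_num <;> constructor <;> nlinarith


lemma newX_mem (x g r : ℝ) (j : Fin 2) (a b : Bool)
    (hx0 : 0 ≤ x) (hx1 : x ≤ 1) (hg0 : 0 < g) (hg1 : g ≤ 1) (hr0 : 0 < r) (hr1 : r ≤ 1) :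
    0 ≤ x + g * ((if j = 0 then 1 else 0) - x) * bval a
        - g * r * (x * (if j = 0 then 1 else 0) - (1-x) * (if j = 1 then 1 else 0))
          * (1 - bval a * bval b) ∧
    x + g * ((if j = 0 then 1 else 0) - x) * bval a
        - g * r * (x * (if j = 0 then 1 else 0) - (1-x) * (if j = 1 then 1 else 0))
          * (1 - bval a * bval b) ≤ 1 := by
  have hgr : 0 < g * r := mul_pos hg0 hr0
  have hgr1 : g * r ≤ 1 := by nlinarith
  rcases fin2_cases j with h | h <;> subst h <;> rcases a with _ | _ <;> rcases b with _ | _ <;>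
    simp only [bval] <;> norm_num <;> constructor <;> nlinarith

lemma div_bound {a b G GN : ℝ} (ha0 : 0 ≤ a) (ha1 : a ≤ 1) (hb0 : 0 ≤ b) (hb1 : b ≤ 1)
    (hG : 0 < G) (hGN : 0 < GN) : |a/G - b/GN| ≤ 1/G + 1/GN := by
  have k1 : a/G ≤ 1/G := by gcongr
  have k2 : 0 ≤ a/G := by positivity
  have k3 : b/GN ≤ 1/GN := by gcongr
  have k4 : 0 ≤ b/GN := by positivity
  rw [abs_le]; constructor <;> linarith

set_option maxHeartbeats 1000000 in
lemma key_poly (x y g r s p q : ℝ) (hx0 : 0 ≤ x) (hy0 : 0 ≤ y) (hxy : x + y = 1)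
    (hg0 : 0 ≤ g) (hg1 : g ≤ 1) (hr0 : 0 ≤ r) (hr1 : r ≤ 1)
    (hs0 : 0 ≤ s) (hs1 : s ≤ 1) (hq0 : 0 ≤ q) (hqp : q ≤ p) (hp1 : p ≤ 1) :
    x*(p*(s*(y*(1-g))^3 + (1-s)*(y*(1-g)+g*r*x)^3) + (1-p)*(y+g*r*x)^3)
      + y*(q*(s*(y+g*x)^3 + (1-s)*(y+g*x-g*r*y)^3)
          + (1-q)*(y*(1-g*r))^3)
    ≤ y^3 - 3*g*(p-q)*x*y^3
        - 3*g*r*y^2*((1-s*q)*y^2-(1-s*p)*x^2)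
        + 3*g^2*(x*y^3*p + x^2*y^2*q)
        + g^3*(-(x*y^3*p) + x^3*y*q)
        + (1-s*q)*(3*g^2*r^2 + g^3*r^3) := by
  have hy' : y = 1 - x := by linarith
  subst hy'
  set y : ℝ := 1 - x with hy
  have hx1 : x ≤ 1 := by linarith
  have hy1 : y ≤ 1 := by simp [hy]; linarith
  have hp0 : 0 ≤ p := le_trans hq0 hqp
  have hs1' : 0 ≤ 1 - s := by linarith
  have hsq : 0 ≤ 1 - s*q := by nlinarith
  have hsp : 0 ≤ 1 - s*p := by nlinarith
  have hsple : 1 - s*p ≤ 1 - s*q := by nlinarith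
  have hcube : x^3 + y^3 ≤ 1 := by nlinarith [mul_nonneg hx0 hy0, sq_nonneg x, sq_nonneg y]
  have hC2 : 0 ≤ 3*g^2*r*(1-s)*x*y^2*(2*(x*p+y*q) - g*(p-q)*x) := by
    have h1 : g*(p-q)*x ≤ 2*(x*p+y*q) := by
      nlinarith [mul_nonneg hy0 hq0, mul_nonneg hx0 hp0, mul_nonneg (sub_nonneg.2 hqp) hx0,
        mul_nonneg (mul_nonneg (sub_nonneg.2 hg1) (sub_nonneg.2 hqp)) hx0]
    have h2 : 0 ≤ 3*g^2*r*(1-s)*x*y^2 := by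
      nlinarith [mul_nonneg (mul_nonneg (mul_nonneg (mul_nonneg (sq_nonneg g) hr0) hs1') hx0) (sq_nonneg y)]
    nlinarith
  have hB2 : 0 ≤ g^3*r^3*((1-s*q) + y^4*(1-s*q) - x^4*(1-s*p)) := by
    have h1 : x^4*(1-s*p) ≤ (1-s*q) + y^4*(1-s*q) := by
      nlinarith [pow_le_one₀ hx0 hx1 (n := 4), pow_nonneg hy0 4]
    have h2 : (0:ℝ) ≤ g^3*r^3 := mul_nonneg (pow_nonneg hg0 3) (pow_nonneg hr0 3)
    nlinarith
  have hAE : 0 ≤ 3*g^2*r^2*((1-s*q) - y*x^3*(1-s*p) - y^4*(1-s*q))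
      + 3*g^3*r^2*(1-s)*x*y*(x^2*p - y^2*q) := by
    have hE : -(3*(g^2*r^2)*(x*y^3*(1-s*q))) ≤ 3*g^3*r^2*(1-s)*x*y*(x^2*p - y^2*q) := by
      have h4 : 0 ≤ 3*(g^3*r^2*(1-s))*((x*y)*(x^2*p)) :=
        mul_nonneg (by nlinarith [mul_nonneg (mul_nonneg (pow_nonneg hg0 3) (sq_nonneg r)) hs1'])
          (mul_nonneg (mul_nonneg hx0 hy0) (mul_nonneg (sq_nonneg x) hp0))
      have h5 : 3*(g^3*r^2*(1-s)*q)*(x*y^3) ≤ 3*(g^2*r^2*(1-s*q))*(x*y^3) := by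
        have hc : g^3*r^2*(1-s)*q ≤ g^2*r^2*(1-s*q) := by
          nlinarith [sq_nonneg g, sq_nonneg r, mul_nonneg (sq_nonneg g) (sq_nonneg r),
            mul_nonneg hg0 (mul_nonneg hs1' hq0),
            mul_nonneg (mul_nonneg (sq_nonneg g) (sq_nonneg r)) (sub_nonneg.2 (by nlinarith : g*((1-s)*q) ≤ 1 - s*q))]
        have hxy3 : 0 ≤ x*y^3 := mul_nonneg hx0 (pow_nonneg hy0 3)
        nlinarith [mul_nonneg (sub_nonneg.2 hc) hxy3]
      nlinarith
    have h6 : 0 ≤ (1-s*q) - y*x^3*(1-s*p) - y^4*(1-s*q) - x*y^3*(1-s*q) := by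
      have e1 : y*x^3*(1-s*p) ≤ x^3*(1-s*q) := by
        nlinarith [pow_nonneg hx0 3, mul_nonneg (pow_nonneg hx0 3) hsp]
      have e2 : y^4*(1-s*q) + x*y^3*(1-s*q) = y^3*(1-s*q) := by simp only [hy]; ring
      have e3 : x^3*(1-s*q) + y^3*(1-s*q) ≤ 1-s*q := by nlinarith
      linarith
    have h7 : 0 ≤ 3*(g^2*r^2) := by nlinarith [mul_nonneg (sq_nonneg g) (sq_nonneg r)]
    have h8 := mul_nonneg h7 h6
    nlinarith [hE, h8]
  have hid : (y^3 - 3*g*(p-q)*x*y^3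
        - 3*g*r*y^2*((1-s*q)*y^2-(1-s*p)*x^2)
        + 3*g^2*(x*y^3*p + x^2*y^2*q)
        + g^3*(-(x*y^3*p) + x^3*y*q)
        + (1-s*q)*(3*g^2*r^2 + g^3*r^3))
      - (x*(p*(s*(y*(1-g))^3 + (1-s)*(y*(1-g)+g*r*x)^3) + (1-p)*(y+g*r*x)^3)
      + y*(q*(s*(y+g*x)^3 + (1-s)*(y+g*x-g*r*y)^3)
          + (1-q)*(y*(1-g*r))^3))
      = (3*g^2*r^2*((1-s*q) - y*x^3*(1-s*p) - y^4*(1-s*q))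
          + 3*g^3*r^2*(1-s)*x*y*(x^2*p - y^2*q))
        + g^3*r^3*((1-s*q) + y^4*(1-s*q) - x^4*(1-s*p))
        + 3*g^2*r*(1-s)*x*y^2*(2*(x*p+y*q) - g*(p-q)*x) := by
    simp only [hy]; ring
  linarith [hC2, hB2, hAE, hid]

set_option maxHeartbeats 4000000

/-- **Lemma 4.4 (decomposition of `Zₙ⁽³⁾`)**: with `n₀ = ⌊1/(4ε²γ₁²π²)⌋ + 1`, for
every `n ≥ n₀`,
`E[Zₙ₊₁⁽³⁾ - Zₙ⁽³⁾ | Fₙ] ≤ γₙ₊₁ (1-Xₙ) Pₙ(Xₙ) + (1-σp₂)(3γₙ₊₁ρₙ₊₁² + γₙ₊₁²ρₙ₊₁³)`. -/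
theorem decomposition_Z3 (Ω : Type) [MeasurableSpace Ω] (S : NS2 Ω)
    (ε : ℝ) (hε : 0 < ε) (hε' : ε ≤ 1/3)
    (n₀ : ℕ) (hn₀ : n₀ = Nat.floor (1 / (4 * ε^2 * S.γ₁^2 * (S.p₁ - S.p₂)^2)) + 1) :
    ∀ n, n₀ ≤ n →
      ∀ᵐ ω ∂S.μ,
        (S.μ[fun ω' => S.Z3 (n+1) ω' - S.Z3 n ω' | S.F n]) ω ≤
          NSstep S.γ₁ (n+1) * (1 - S.X n ω) * Pcub S.p₁ S.p₂ S.σ S.γ₁ S.ρ₁ n (S.X n ω)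
            + (1 - S.σ * S.p₂) *
              (3 * NSstep S.γ₁ (n+1) * (NSstep S.ρ₁ (n+1))^2
                + (NSstep S.γ₁ (n+1))^2 * (NSstep S.ρ₁ (n+1))^3) := by
  intro n hn
  haveI := S.prob
  have hn1 : 1 ≤ n := le_trans (by omega) hn
  have hm : S.F n ≤ _ := S.F.le n
  have hG0 : 0 < NSstep S.γ₁ (n+1) := NSstep_pos S.hγ₁.1 (by omega)
  have hG1 : NSstep S.γ₁ (n+1) ≤ 1 := (NSstep_le S.hγ₁.1 (by omega)).trans S.hγ₁.2.le
  have hGN0 : 0 < NSstep S.γ₁ n := NSstep_pos S.hγ₁.1 hn1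
  have hR0 : 0 < NSstep S.ρ₁ (n+1) := NSstep_pos S.hρ₁.1 (by omega)
  have hR1 : NSstep S.ρ₁ (n+1) ≤ 1 := (NSstep_le S.hρ₁.1 (by omega)).trans S.hρ₁.2.le
  set G := NSstep S.γ₁ (n+1) with hGdef
  set GN := NSstep S.γ₁ n with hGNdef
  set R := NSstep S.ρ₁ (n+1) with hRdef
  set E : Fin 2 × Bool × Bool → Set Ω := fun u =>
    {ω | S.I (n+1) ω = u.1 ∧ S.A (n+1) u.1 ω = bval u.2.1 ∧ S.B (n+1) ω = bval u.2.2} with hEdef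
  set gfun : Fin 2 × Bool × Bool → ℝ → ℝ := fun u x =>
    (1 - (x + G * ((if u.1 = 0 then 1 else 0) - x) * bval u.2.1
      - G * R * (x * (if u.1 = 0 then 1 else 0) - (1-x) * (if u.1 = 1 then 1 else 0))
        * (1 - bval u.2.1 * bval u.2.2)))^3 / G - (1-x)^3 / GN with hgdef
  set f : Fin 2 × Bool × Bool → Ω → ℝ := fun u =>
    (fun ω => gfun u (S.X n ω)) * (E u).indicator (fun _ => (1:ℝ)) with hfdef
  set w : Fin 2 × Bool × Bool → Ω → ℝ := fun u ω =>
    (if u.1 = 0 then S.X n ω else 1 - S.X n ω) * bern (if u.1 = 0 then S.p₁ else S.p₂) u.2.1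
      * bern S.σ u.2.2 with hwdef
  -- pointwise decomposition
  have hDecomp : (fun ω => S.Z3 (n+1) ω - S.Z3 n ω) = ∑ u : Fin 2 × Bool × Bool, f u := by
    funext ω
    have hA := S.hAval (n+1) (S.I (n+1) ω) ω
    have hB := S.hBval (n+1) ω
    have hZ : S.Z3 (n+1) ω - S.Z3 n ω
        = (1 - S.X (n+1) ω)^3 / G - (1 - S.X n ω)^3 / GN := rfl
    rw [Finset.sum_apply, hZ]
    rcases fin2_cases (S.I (n+1) ω) with h | h <;> rw [h] at hA <;>
      rcases hA with hA | hA <;> rcases hB with hB | hB <;>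
        simp only [hfdef, hgdef, hEdef, Pi.mul_apply, Fintype.sum_prod_type,
          Fin.sum_univ_two, Fintype.sum_bool, Set.indicator_apply, Set.mem_setOf_eq,
          S.hrec n ω, h, hA, hB, bval] <;>
        norm_num <;> rfl
  -- newX stays in [0,1]
  have hnewX : ∀ (u : Fin 2 × Bool × Bool) x, x ∈ Set.Icc (0:ℝ) 1 →
      (x + G * ((if u.1 = 0 then 1 else 0) - x) * bval u.2.1
        - G * R * (x * (if u.1 = 0 then 1 else 0) - (1-x) * (if u.1 = 1 then 1 else 0))
          * (1 - bval u.2.1 * bval u.2.2)) ∈ Set.Icc (0:ℝ) 1 := by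
    rintro u x ⟨hx0, hx1⟩
    have := newX_mem x G R u.1 u.2.1 u.2.2 hx0 hx1 hG0 hG1 hR0 hR1
    exact ⟨this.1, this.2⟩
  -- bound on gfun ∘ X
  have hgbound : ∀ u ω, |gfun u (S.X n ω)| ≤ 1/G + 1/GN := by
    intro u ω
    obtain ⟨h1, h2⟩ := hnewX u (S.X n ω) (S.X_mem n ω)
    obtain ⟨h3, h4⟩ := S.X_mem n ω
    simp only [hgdef]
    exact div_bound (pow_nonneg (by linarith) 3) (pow_le_one₀ (by linarith) (by linarith))
      (pow_nonneg (by linarith) 3) (pow_le_one₀ (by linarith) (by linarith)) hG0 hGN0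
  -- measurability of events
  have hEmeas : ∀ u, MeasurableSet (E u) := by
    rintro ⟨j, a, b⟩
    have hI : Measurable (S.I (n+1)) := (S.hImeas n).mono (S.F.le (n+1)) le_rfl
    have e : E (j, a, b) = S.I (n+1) ⁻¹' {j} ∩ (S.A (n+1) j ⁻¹' {bval a} ∩ S.B (n+1) ⁻¹' {bval b}) := by
      ext ω; simp [hEdef, Set.mem_setOf_eq, and_assoc]
    rw [e]
    exact (hI (measurableSet_singleton j)).inter
      (((S.hAmeas (n+1) j) (measurableSet_singleton _)).inter
        ((S.hBmeas (n+1)) (measurableSet_singleton _)))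
  have hgXmeas : ∀ u, Measurable[S.F n] fun ω => gfun u (S.X n ω) := by
    intro u
    have hcont : Continuous (gfun u) := by
      simp only [hgdef]
      have c1 : Continuous fun x : ℝ => x + G * ((if u.1 = 0 then (1:ℝ) else 0) - x) * bval u.2.1
          - G * R * (x * (if u.1 = 0 then 1 else 0) - (1-x) * (if u.1 = 1 then 1 else 0))
            * (1 - bval u.2.1 * bval u.2.2) := by fun_prop
      have c2 : Continuous fun x : ℝ => (1 - (x + G * ((if u.1 = 0 then (1:ℝ) else 0) - x) * bval u.2.1
          - G * R * (x * (if u.1 = 0 then 1 else 0) - (1-x) * (if u.1 = 1 then 1 else 0))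
            * (1 - bval u.2.1 * bval u.2.2)))^3 := (continuous_const.sub c1).pow 3
      exact (c2.div_const G).sub (((continuous_const.sub continuous_id).pow 3).div_const GN)
    exact hcont.measurable.comp (S.hXmeas n)
  have hind_int : ∀ u, Integrable ((E u).indicator (fun _ => (1:ℝ))) S.μ := fun u =>
    (integrable_const (1:ℝ)).indicator (hEmeas u)
  have hf_int : ∀ u, Integrable (f u) S.μ := by
    intro u
    apply Integrable.mono' (integrable_const (1/G + 1/GN))
    · exact (((hgXmeas u).mono hm le_rfl).mul
        (measurable_const.indicator (hEmeas u))).aestronglyMeasurable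
    · filter_upwards with ω
      have hfeq : f u ω = gfun u (S.X n ω) * (E u).indicator (fun _ => (1:ℝ)) ω := rfl
      rw [Real.norm_eq_abs, hfeq, abs_mul]
      have hi : |(E u).indicator (fun _ => (1:ℝ)) ω| ≤ 1 := by
        by_cases hmem : ω ∈ E u <;> simp [Set.indicator_apply, hmem]
      have := hgbound u ω
      have habs : (0:ℝ) ≤ |gfun u (S.X n ω)| := abs_nonneg _
      nlinarith
  -- conditional expectation computation
  have hce1 : S.μ[fun ω' => S.Z3 (n+1) ω' - S.Z3 n ω' | S.F n]
      =ᵐ[S.μ] ∑ u : Fin 2 × Bool × Bool, S.μ[f u | S.F n] := by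
    rw [show (fun ω' => S.Z3 (n+1) ω' - S.Z3 n ω') = ∑ u : Fin 2 × Bool × Bool, f u from hDecomp]
    exact condExp_finsetSum (fun u _ => hf_int u) _
  have hce2 : ∀ u : Fin 2 × Bool × Bool, S.μ[f u | S.F n]
      =ᵐ[S.μ] fun ω => gfun u (S.X n ω) * w u ω := by
    intro u
    have hpull := condExp_mul_of_stronglyMeasurable_left (μ := S.μ) (m := S.F n)
      ((hgXmeas u).stronglyMeasurable) (hf_int u) (hind_int u)
    have hlaw := S.condLaw n u.1 u.2.1 u.2.2
    refine hpull.trans ?_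
    filter_upwards [hlaw] with ω hω
    simp only [Pi.mul_apply]
    rw [hω]
  have hce3 : S.μ[fun ω' => S.Z3 (n+1) ω' - S.Z3 n ω' | S.F n]
      =ᵐ[S.μ] fun ω => ∑ u : Fin 2 × Bool × Bool, gfun u (S.X n ω) * w u ω := by
    refine hce1.trans ?_
    have := eventuallyEq_sum (s := (Finset.univ : Finset (Fin 2 × Bool × Bool)))
      (fun u _ => hce2 u)
    refine this.trans ?_
    filter_upwards with ω
    rw [Finset.sum_apply]
  -- final pointwise estimate
  filter_upwards [hce3] with ω hω
  rw [hω]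
  obtain ⟨hx0, hx1⟩ := S.X_mem n ω
  set x := S.X n ω with hxdef
  have hRG : S.ρ₁ / S.γ₁ = R / G := by
    rw [hRdef, hGdef]
    unfold NSstep
    have hsq : Real.sqrt ((n+1 : ℕ) : ℝ) ≠ 0 := by
      refine ne_of_gt (Real.sqrt_pos.2 ?_)
      exact_mod_cast Nat.succ_pos n
    field_simp
  have e1 : (∑ u : Fin 2 × Bool × Bool, gfun u x * w u ω)
      = (x*(S.p₁*(S.σ*((1-x)*(1-G))^3 + (1-S.σ)*((1-x)*(1-G)+G*R*x)^3)
            + (1-S.p₁)*((1-x)+G*R*x)^3)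
          + (1-x)*(S.p₂*(S.σ*((1-x)+G*x)^3 + (1-S.σ)*((1-x)+G*x-G*R*(1-x))^3)
            + (1-S.p₂)*((1-x)*(1-G*R))^3)) / G - (1-x)^3 / GN := by
    simp only [hgdef, hwdef, bern, bval, Fintype.sum_prod_type, Fin.sum_univ_two,
      Fintype.sum_bool, ← hxdef]
    norm_num
    field_simp
    ring
  have e2 : G * (1-x) * Pcub S.p₁ S.p₂ S.σ S.γ₁ S.ρ₁ n x
      + (1 - S.σ*S.p₂)*(3*G*R^2+G^2*R^3)
      = ((1-x)^3 - 3*G*(S.p₁-S.p₂)*x*(1-x)^3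
          - 3*G*R*(1-x)^2*((1-S.σ*S.p₂)*(1-x)^2-(1-S.σ*S.p₁)*x^2)
          + 3*G^2*(x*(1-x)^3*S.p₁ + x^2*(1-x)^2*S.p₂)
          + G^3*(-(x*(1-x)^3*S.p₁)+x^3*(1-x)*S.p₂)
          + (1-S.σ*S.p₂)*(3*G^2*R^2+G^3*R^3)) / G - (1-x)^3/GN := by
    simp only [Pcub, epsSeq, kappa, ← hGdef, ← hGNdef, hRG]
    field_simp
    ring
  rw [e1]
  calc _ ≤ ((1-x)^3 - 3*G*(S.p₁-S.p₂)*x*(1-x)^3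
          - 3*G*R*(1-x)^2*((1-S.σ*S.p₂)*(1-x)^2-(1-S.σ*S.p₁)*x^2)
          + 3*G^2*(x*(1-x)^3*S.p₁ + x^2*(1-x)^2*S.p₂)
          + G^3*(-(x*(1-x)^3*S.p₁)+x^3*(1-x)*S.p₂)
          + (1-S.σ*S.p₂)*(3*G^2*R^2+G^3*R^3)) / G - (1-x)^3/GN := by
        have hkey := key_poly x (1-x) G R S.σ S.p₁ S.p₂ hx0 (by linarith) (by ring)
          hG0.le hG1 hR0.le hR1 S.hσ.1 S.hσ.2 S.hp₂ S.hp.le S.hp₁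
        exact sub_le_sub_right ((div_le_div_iff_of_pos_right hG0).mpr hkey) _
    _ = _ := e2.symm
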